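/- Let n ≥ 1, let B be an n×n real symmetric positive-definite matrix, and let s, y ∈ ℝⁿ with s ≠ 0 and sᵀ y > 0. Define the BFGS update B⁺ = B − (B s)(B s)ᵀ/(sᵀ B s) + y yᵀ/(sᵀ y). Then det(B⁺) = det(B) · (sᵀ y)/(sᵀ B s). -/

import Mathlib

open scoped RealInnerProductSpace
open Matrix

/-- **Determinant of the BFGS update.** For an `n × n` real symmetric positive-definite
matrix `B` and vectors `s, y ∈ ℝⁿ` with `s ≠ 0` and `sᵀ y > 0`, the BFGS update
`B⁺ = B − (B s)(B s)ᵀ/(sᵀ B s) + y yᵀ/(sᵀ y)` satisfies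
`det(B⁺) = det(B) · (sᵀ y)/(sᵀ B s)`. -/
theorem bfgs_det_update (n : ℕ) (hn : 1 ≤ n)
    (B : Matrix (Fin n) (Fin n) ℝ) (hB : B.PosDef)
    (s y : EuclideanSpace ℝ (Fin n))
    (hs : s ≠ 0) (hsy : 0 < ⟪s, y⟫)
    (Bplus : Matrix (Fin n) (Fin n) ℝ)
    (hBplus : Bplus =
      B - (⟪s, Matrix.toEuclideanLin B s⟫)⁻¹ •
            Matrix.vecMulVec (Matrix.toEuclideanLin B s) (Matrix.toEuclideanLin B s)
        + (⟪s, y⟫)⁻¹ • Matrix.vecMulVec y y) :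
    Bplus.det = B.det * (⟪s, y⟫ / ⟪s, Matrix.toEuclideanLin B s⟫) := by
  set s' : Fin n → ℝ := (WithLp.equiv 2 _) s with hs'
  set y' : Fin n → ℝ := (WithLp.equiv 2 _) y with hy'
  set v : Fin n → ℝ := B *ᵥ s' with hv
  have hs0 : s' ≠ 0 := by simpa [hs'] using hs
  have hα_inner : ⟪s, Matrix.toEuclideanLin B s⟫ = s' ⬝ᵥ v := by
    simp [PiLp.inner_apply, Matrix.toEuclideanLin_apply, dotProduct, hv, hs', mul_comm]
  have hβ_inner : ⟪s, y⟫ = s' ⬝ᵥ y' := by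
    simp [PiLp.inner_apply, dotProduct, hs', hy', mul_comm]
  set α : ℝ := s' ⬝ᵥ v with hα
  set β : ℝ := s' ⬝ᵥ y' with hβ
  have hαpos : 0 < α := by
    have := hB.dotProduct_mulVec_pos hs0
    simpa [star_trivial] using this
  have hβpos : 0 < β := by rwa [hβ_inner] at hsy
  have hα0 : α ≠ 0 := ne_of_gt hαpos
  have hβ0 : β ≠ 0 := ne_of_gt hβpos
  have hBdet : IsUnit B.det := (ne_of_gt hB.det_pos).isUnit
  have hBsym : Bᵀ = B := by
    have := hB.1
    simpa [Matrix.IsHermitian, Matrix.conjTranspose_eq_transpose_of_trivial] using this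
  have hinvv : B⁻¹ *ᵥ v = s' := by
    rw [hv, Matrix.mulVec_mulVec, Matrix.nonsing_inv_mul B hBdet, Matrix.one_mulVec]
  have hBinvsym : (B⁻¹)ᵀ = B⁻¹ := by rw [Matrix.transpose_nonsing_inv, hBsym]
  have hvBiy : v ⬝ᵥ (B⁻¹ *ᵥ y') = β := by
    rw [Matrix.dotProduct_mulVec]
    have : v ᵥ* B⁻¹ = s' := by
      rw [← hBinvsym, Matrix.vecMul_transpose, hinvv]
    rw [this]
  have hvs : v ⬝ᵥ s' = α := dotProduct_comm v s'
  have hys : y' ⬝ᵥ s' = β := dotProduct_comm y' s'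
  -- rank-two update matrices
  set U : Matrix (Fin n) (Fin 2) ℝ := Matrix.of fun i j => ![v, y'] j i with hU
  set V : Matrix (Fin 2) (Fin n) ℝ :=
    Matrix.of fun j i => ![(-α⁻¹) • v, β⁻¹ • y'] j i with hV
  have hsplit : Bplus = B + U * V := by
    rw [hBplus, hα_inner, hβ_inner]
    ext i k
    have hvv : ∀ i, (Matrix.toEuclideanLin B s) i = v i := fun i => rfl
    simp only [hU, hV, Matrix.mul_apply, Fin.sum_univ_two, Matrix.vecMulVec_apply,
      Matrix.sub_apply, Matrix.add_apply, Matrix.smul_apply, smul_eq_mul, hvv,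
      Matrix.of_apply, Matrix.cons_val_zero, Matrix.cons_val_one, Matrix.head_cons,
      Pi.smul_apply, Pi.neg_apply]
    have hyy : ∀ i, (y : EuclideanSpace ℝ (Fin n)) i = y' i := fun i => rfl
    rw [hyy i, hyy k]
    ring
  have hM : ∀ j j' : Fin 2, (V * B⁻¹ * U) j j' =
      (![(-α⁻¹) • v, β⁻¹ • y'] j) ⬝ᵥ (B⁻¹ *ᵥ (![v, y'] j')) := by
    intro j j'
    rw [Matrix.mul_assoc]
    simp [Matrix.mul_apply, Matrix.mulVec, dotProduct, Finset.mul_sum, hU, hV]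
  have hdet2 : (1 + V * B⁻¹ * U).det = α⁻¹ * β := by
    rw [Matrix.det_fin_two]
    have h00 : (V * B⁻¹ * U) 0 0 = -1 := by
      rw [hM]; simp [hinvv, hvs]
      field_simp
    have h01 : (V * B⁻¹ * U) 0 1 = -(α⁻¹ * β) := by
      rw [hM]; simp [hvBiy]
    have h10 : (V * B⁻¹ * U) 1 0 = 1 := by
      rw [hM]; simp [hinvv, hys]
      field_simp
    simp [Matrix.add_apply, Matrix.one_apply, h00, h01, h10]
  rw [hsplit, Matrix.det_add_mul U V hBdet, hdet2, hα_inner, hβ_inner]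
  rw [div_eq_inv_mul]
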